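/- Let θ ∈ [0,1], let x ∈ R^n with residual r = b − Ax satisfying Aᵀr ≠ 0, and let J be the greedy index set determined by θ and r. Then ‖Ã_Jᵀ A(x − x⋆)‖₂² ≥ |J| · ‖Aᵀr‖₂²/‖A‖_F² ≥ |J| · (σ_min(A)²/‖A‖_F²) · ‖x − x⋆‖²_{AᵀA}. -/

import Mathlib

noncomputable section
open Matrix

/-- Squared Euclidean norm `‖v‖₂²` of a vector. -/
def norm2 {ι : Type*} [Fintype ι] (v : ι → ℝ) : ℝ := ∑ i, (v i) ^ 2

/-- Squared Frobenius norm `‖A‖_F²` of a matrix. -/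
def frob2 {ι κ : Type*} [Fintype ι] [Fintype κ] (A : Matrix ι κ ℝ) : ℝ :=
  ∑ i, ∑ j, (A i j) ^ 2

/-- Squared largest singular value `σ_max(B)²`, i.e. the largest eigenvalue of `Bᵀ * B`. -/
def sigmaMaxSq {ι κ : Type*} [Fintype ι] [Fintype κ] [DecidableEq κ]
    (B : Matrix ι κ ℝ) : ℝ :=
  sSup (Set.range (Matrix.isHermitian_conjTranspose_mul_self B).eigenvalues)

/-- Squared smallest singular value `σ_min(B)²`, i.e. the smallest eigenvalue of `Bᵀ * B`. -/
def sigmaMinSq {ι κ : Type*} [Fintype ι] [Fintype κ] [DecidableEq κ]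
    (B : Matrix ι κ ℝ) : ℝ :=
  sInf (Set.range (Matrix.isHermitian_conjTranspose_mul_self B).eigenvalues)

/-- Squared Euclidean norm `‖A_(j)‖₂²` of the `j`-th column of `A`. -/
def col2 {m n : ℕ} (A : Matrix (Fin m) (Fin n) ℝ) (j : Fin n) : ℝ := ∑ i, (A i j) ^ 2

/-- `A` has full column rank: its columns are linearly independent. -/
def FullColRank {m n : ℕ} (A : Matrix (Fin m) (Fin n) ℝ) : Prop :=
  LinearIndependent ℝ fun j : Fin n => (fun i => A i j : Fin m → ℝ)

/-- `max_{1 ≤ j ≤ n} |A_(j)ᵀ r|² / ‖A_(j)‖₂²`. -/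
def maxRatio {m n : ℕ} (A : Matrix (Fin m) (Fin n) ℝ) (r : Fin m → ℝ) : ℝ :=
  ⨆ j : Fin n, ((Aᵀ *ᵥ r) j) ^ 2 / col2 A j

/-- The greedy parameter
`ε = (θ/‖Aᵀr‖₂²)·max_j |A_(j)ᵀ r|²/‖A_(j)‖₂² + (1−θ)/‖A‖_F²`. -/
def eps {m n : ℕ} (A : Matrix (Fin m) (Fin n) ℝ) (r : Fin m → ℝ) (θ : ℝ) : ℝ :=
  θ / norm2 (Aᵀ *ᵥ r) * maxRatio A r + (1 - θ) / frob2 A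

open Classical in
/-- The greedy index set `J = { j : |A_(j)ᵀ r|² ≥ ε ‖Aᵀr‖₂² ‖A_(j)‖₂² }`. -/
def greedySet {m n : ℕ} (A : Matrix (Fin m) (Fin n) ℝ) (r : Fin m → ℝ) (θ : ℝ) :
    Finset (Fin n) :=
  Finset.univ.filter fun j =>
    eps A r θ * norm2 (Aᵀ *ᵥ r) * col2 A j ≤ ((Aᵀ *ᵥ r) j) ^ 2

/-- The column submatrix `A_J` of `A`, with columns indexed by `J`. -/
def subCols {m n : ℕ} (A : Matrix (Fin m) (Fin n) ℝ) (J : Finset (Fin n)) :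
    Matrix (Fin m) {j // j ∈ J} ℝ :=
  A.submatrix id fun j => (j : Fin n)

/-- The submatrix `I_J` of the `n × n` identity with columns indexed by `J`. -/
def subId {n : ℕ} (J : Finset (Fin n)) : Matrix (Fin n) {j // j ∈ J} ℝ :=
  (1 : Matrix (Fin n) (Fin n) ℝ).submatrix id fun j => (j : Fin n)

/-- Moore–Penrose pseudoinverse of a full-column-rank matrix: `B† = (BᵀB)⁻¹Bᵀ`. -/
def pinv {ι κ : Type*} [Fintype ι] [Fintype κ] [DecidableEq κ] (B : Matrix ι κ ℝ) :
    Matrix κ ι ℝ :=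
  (Bᵀ * B)⁻¹ * Bᵀ

/-- The matrix `Ã_J` whose columns are the normalized columns `A_(j)/‖A_(j)‖₂`, `j ∈ J`. -/
def tildeA {m n : ℕ} (A : Matrix (Fin m) (Fin n) ℝ) (J : Finset (Fin n)) :
    Matrix (Fin m) {j // j ∈ J} ℝ :=
  Matrix.of fun i j => A i (j : Fin n) / Real.sqrt (col2 A (j : Fin n))

/-- The matrix `Ĩ_J` whose columns are `e_j/‖A_(j)‖₂`, `j ∈ J`. -/
def tildeI {m n : ℕ} (A : Matrix (Fin m) (Fin n) ℝ) (J : Finset (Fin n)) :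
    Matrix (Fin n) {j // j ∈ J} ℝ :=
  Matrix.of fun i j => (if i = (j : Fin n) then 1 else 0) / Real.sqrt (col2 A (j : Fin n))


/-- Auxiliary: squared norm as dot product. -/
lemma norm2_eq_dot' {ι : Type*} [Fintype ι] (v : ι → ℝ) : norm2 v = v ⬝ᵥ v := by
  simp [norm2, dotProduct, sq]

lemma norm2_nonneg' {ι : Type*} [Fintype ι] (v : ι → ℝ) : 0 ≤ norm2 v :=
  Finset.sum_nonneg fun _ _ => sq_nonneg _

lemma norm2_pos' {ι : Type*} [Fintype ι] {v : ι → ℝ} (hv : v ≠ 0) : 0 < norm2 v := by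
  rcases Function.ne_iff.mp hv with ⟨i, hi⟩
  have h1 : 0 < v i ^ 2 := by
    have := sq_nonneg (v i)
    rcases this.lt_or_eq with h | h
    · exact h
    · exact absurd (pow_eq_zero_iff (n := 2) (by norm_num) |>.mp h.symm) hi
  exact lt_of_lt_of_le h1
    (Finset.single_le_sum (fun j _ => sq_nonneg (v j)) (Finset.mem_univ i))

/-- Key spectral inequality: `σ_min(A)² ‖Az‖² ≤ ‖AᵀAz‖²`. -/
lemma spectral_key' {m n : ℕ} (A : Matrix (Fin m) (Fin n) ℝ) (z : Fin n → ℝ) :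
    sigmaMinSq A * ((A *ᵥ z) ⬝ᵥ (A *ᵥ z)) ≤ ((Aᵀ * A) *ᵥ z) ⬝ᵥ ((Aᵀ * A) *ᵥ z) := by
  have hAt : Aᴴ = Aᵀ := Matrix.conjTranspose_eq_transpose_of_trivial A
  set hM := Matrix.isHermitian_conjTranspose_mul_self A with hMdef
  set ev := hM.eigenvalues with hev
  set V : Matrix (Fin n) (Fin n) ℝ :=
    (Matrix.IsHermitian.eigenvectorUnitary hM : Matrix (Fin n) (Fin n) ℝ) with hV
  have hVtV : Vᵀ * V = 1 := by
    have := Unitary.coe_star_mul_self (Matrix.IsHermitian.eigenvectorUnitary hM)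
    rw [hV]
    simpa [Matrix.star_eq_conjTranspose, Matrix.conjTranspose_eq_transpose_of_trivial] using this
  have hspec : Aᵀ * A = V * Matrix.diagonal ev * Vᵀ := by
    have h := hM.spectral_theorem
    calc Aᵀ * A = Aᴴ * A := by rw [hAt]
    _ = V * Matrix.diagonal ev * Vᵀ := by
        rw [hV, hev]
        simpa [Matrix.star_eq_conjTranspose, Matrix.conjTranspose_eq_transpose_of_trivial] using h
  set w : Fin n → ℝ := Vᵀ *ᵥ z with hw
  have hMz : (Aᵀ * A) *ᵥ z = V *ᵥ (Matrix.diagonal ev *ᵥ w) := by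
    rw [hspec, hw]
    simp [Matrix.mulVec_mulVec, Matrix.mul_assoc]
  have hVdot : ∀ a : Fin n → ℝ, (V *ᵥ a) ⬝ᵥ (V *ᵥ a) = a ⬝ᵥ a := by
    intro a
    rw [Matrix.dotProduct_mulVec, ← Matrix.mulVec_transpose, Matrix.mulVec_mulVec, hVtV,
      Matrix.one_mulVec]
  have h1 : ((Aᵀ * A) *ᵥ z) ⬝ᵥ ((Aᵀ * A) *ᵥ z) = ∑ i, ev i ^ 2 * (w i) ^ 2 := by
    rw [hMz, hVdot]
    simp only [dotProduct, Matrix.mulVec_diagonal]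
    exact Finset.sum_congr rfl fun i _ => by ring
  have h2 : (A *ᵥ z) ⬝ᵥ (A *ᵥ z) = ∑ i, ev i * (w i) ^ 2 := by
    have h3 : (A *ᵥ z) ⬝ᵥ (A *ᵥ z) = z ⬝ᵥ ((Aᵀ * A) *ᵥ z) := by
      rw [Matrix.dotProduct_mulVec, ← Matrix.mulVec_transpose, Matrix.mulVec_mulVec,
        dotProduct_comm, Matrix.dotProduct_mulVec, ← Matrix.mulVec_transpose]
    rw [h3, hMz, Matrix.dotProduct_mulVec, ← Matrix.mulVec_transpose, ← hw]
    simp only [dotProduct, Matrix.mulVec_diagonal]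
    exact Finset.sum_congr rfl fun i _ => by ring
  rw [h1, h2, Finset.mul_sum]
  apply Finset.sum_le_sum
  intro i _
  have hnn : 0 ≤ ev i := Matrix.eigenvalues_conjTranspose_mul_self_nonneg A i
  have hle : sigmaMinSq A ≤ ev i :=
    csInf_le (Set.Finite.bddBelow (Set.finite_range _)) ⟨i, rfl⟩
  calc sigmaMinSq A * (ev i * w i ^ 2) ≤ ev i * (ev i * w i ^ 2) :=
        mul_le_mul_of_nonneg_right hle (mul_nonneg hnn (sq_nonneg _))
    _ = ev i ^ 2 * w i ^ 2 := by ring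

/-- for the greedy index set `J`,
`‖Ã_Jᵀ A(x − x⋆)‖₂² ≥ |J| ‖Aᵀr‖₂²/‖A‖_F² ≥ |J| (σ_min(A)²/‖A‖_F²) ‖x − x⋆‖²_{AᵀA}`. -/
theorem stmt15 {m n : ℕ} (A : Matrix (Fin m) (Fin n) ℝ) (hA : FullColRank A)
    (b : Fin m → ℝ) (xstar : Fin n → ℝ) (hstar : (Aᵀ * A) *ᵥ xstar = Aᵀ *ᵥ b)
    (θ : ℝ) (hθ : θ ∈ Set.Icc (0 : ℝ) 1) (x : Fin n → ℝ)
    (r : Fin m → ℝ) (hr : r = b - A *ᵥ x) (hr0 : Aᵀ *ᵥ r ≠ 0)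
    (J : Finset (Fin n)) (hJ : J = greedySet A r θ) :
    norm2 ((tildeA A J)ᵀ *ᵥ (A *ᵥ (x - xstar))) ≥
        (J.card : ℝ) * (norm2 (Aᵀ *ᵥ r) / frob2 A) ∧
      (J.card : ℝ) * (norm2 (Aᵀ *ᵥ r) / frob2 A) ≥
        (J.card : ℝ) * (sigmaMinSq A / frob2 A) * norm2 (A *ᵥ (x - xstar)) := by
  classical
  set g : Fin n → ℝ := Aᵀ *ᵥ r with hg
  -- n is nonempty
  have hne : Nonempty (Fin n) := by
    by_contra h
    have : IsEmpty (Fin n) := not_nonempty_iff.mp h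
    exact hr0 (funext fun j => this.elim j)
  -- columns are nonzero
  have hcol : ∀ j, 0 < col2 A j := by
    intro j
    have hnz : (fun i => A i j : Fin m → ℝ) ≠ 0 := hA.ne_zero j
    exact norm2_pos' hnz
  have hfrob : frob2 A = ∑ j, col2 A j := by
    unfold frob2 col2
    exact Finset.sum_comm
  have hfrobpos : 0 < frob2 A := by
    rw [hfrob]
    exact Finset.sum_pos (fun j _ => hcol j) Finset.univ_nonempty
  have hgpos : 0 < norm2 g := norm2_pos' hr0
  -- A^T A (x - xstar) = -g
  have hAtAr : Aᵀ *ᵥ (A *ᵥ (x - xstar)) = -g := by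
    rw [hg, hr, Matrix.mulVec_mulVec, Matrix.mulVec_sub, Matrix.mulVec_sub, ← hstar,
      Matrix.mulVec_mulVec]
    abel
  -- entries of the LHS vector
  have hentry : ∀ j : {j // j ∈ J},
      ((tildeA A J)ᵀ *ᵥ (A *ᵥ (x - xstar))) j
        = -(g (j : Fin n)) / Real.sqrt (col2 A (j : Fin n)) := by
    intro j
    have : ((tildeA A J)ᵀ *ᵥ (A *ᵥ (x - xstar))) j
        = (∑ i, A i (j : Fin n) * (A *ᵥ (x - xstar)) i) / Real.sqrt (col2 A (j : Fin n)) := by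
      simp only [Matrix.mulVec, dotProduct, Matrix.transpose_apply, tildeA, Matrix.of_apply]
      rw [Finset.sum_div]
      exact Finset.sum_congr rfl fun i _ => by ring
    rw [this]
    congr 1
    have := congrFun hAtAr (j : Fin n)
    simpa [Matrix.mulVec, dotProduct, Matrix.transpose_apply] using this
  -- squared norm of the LHS
  have hLHS : norm2 ((tildeA A J)ᵀ *ᵥ (A *ᵥ (x - xstar)))
      = ∑ j ∈ J, g j ^ 2 / col2 A j := by
    rw [norm2, ← Finset.sum_coe_sort J (fun j => g j ^ 2 / col2 A j)]
    apply Finset.sum_congr rfl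
    intro j _
    rw [hentry j]
    rw [div_pow, neg_sq, Real.sq_sqrt (hcol _).le]
  -- max ratio lower bound
  have hmax : norm2 g ≤ maxRatio A r * frob2 A := by
    have hmr : ∀ j, g j ^ 2 / col2 A j ≤ maxRatio A r := by
      intro j
      exact le_ciSup (f := fun j => ((Aᵀ *ᵥ r) j) ^ 2 / col2 A j)
        (Set.Finite.bddAbove (Set.finite_range _)) j
    calc norm2 g = ∑ j, g j ^ 2 := by rw [norm2]
      _ = ∑ j, (g j ^ 2 / col2 A j) * col2 A j := by
          refine Finset.sum_congr rfl fun j _ => ?_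
          rw [div_mul_cancel₀ _ (hcol j).ne']
      _ ≤ ∑ j, maxRatio A r * col2 A j :=
          Finset.sum_le_sum fun j _ => mul_le_mul_of_nonneg_right (hmr j) (hcol j).le
      _ = maxRatio A r * frob2 A := by rw [← Finset.mul_sum, hfrob]
  -- eps lower bound
  have heps : 1 / frob2 A ≤ eps A r θ := by
    obtain ⟨hθ0, hθ1⟩ := hθ
    have hmr2 : norm2 g / frob2 A ≤ maxRatio A r := by
      rw [div_le_iff₀ hfrobpos]; exact hmax
    have h1 : θ / frob2 A ≤ θ / norm2 g * maxRatio A r := by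
      have := mul_le_mul_of_nonneg_left hmr2 (div_nonneg hθ0 hgpos.le)
      calc θ / frob2 A = θ / norm2 g * (norm2 g / frob2 A) := by
            field_simp
        _ ≤ θ / norm2 g * maxRatio A r := this
    have : θ / frob2 A + (1 - θ) / frob2 A = 1 / frob2 A := by
      rw [← add_div]; ring_nf
    rw [eps, ← this]
    exact add_le_add_left h1 _
  -- per-index bound on the greedy set
  have hJbound : ∀ j ∈ J, norm2 g / frob2 A ≤ g j ^ 2 / col2 A j := by
    intro j hj
    rw [hJ, greedySet, Finset.mem_filter] at hj
    have hj2 : eps A r θ * norm2 g * col2 A j ≤ g j ^ 2 := hj.2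
    have h3 : eps A r θ * norm2 g ≤ g j ^ 2 / col2 A j := by
      rw [le_div_iff₀ (hcol j)]; exact hj2
    refine le_trans ?_ h3
    calc norm2 g / frob2 A = 1 / frob2 A * norm2 g := by ring
      _ ≤ eps A r θ * norm2 g := mul_le_mul_of_nonneg_right heps hgpos.le
  constructor
  · -- first inequality
    rw [hLHS]
    have := Finset.card_nsmul_le_sum J (fun j => g j ^ 2 / col2 A j)
      (norm2 g / frob2 A) hJbound
    calc (J.card : ℝ) * (norm2 g / frob2 A)
        = J.card • (norm2 g / frob2 A) := by rw [nsmul_eq_mul]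
      _ ≤ ∑ j ∈ J, g j ^ 2 / col2 A j := this
  · -- second inequality
    set z : Fin n → ℝ := xstar - x with hz
    have hgz : g = (Aᵀ * A) *ᵥ z := by
      rw [hg, hr, hz, Matrix.mulVec_sub, Matrix.mulVec_sub, hstar, Matrix.mulVec_mulVec]
    have hAz : A *ᵥ (x - xstar) = -(A *ᵥ z) := by
      rw [hz, ← Matrix.mulVec_neg]
      congr 1
      abel
    have hn2 : norm2 (A *ᵥ (x - xstar)) = (A *ᵥ z) ⬝ᵥ (A *ᵥ z) := by
      rw [hAz, ← norm2_eq_dot', norm2, norm2]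
      exact Finset.sum_congr rfl fun i _ => by simp
    have hkey : sigmaMinSq A * norm2 (A *ᵥ (x - xstar)) ≤ norm2 g := by
      rw [hn2, norm2_eq_dot', hgz]
      exact spectral_key' A z
    have hcnn : (0:ℝ) ≤ (J.card : ℝ) / frob2 A := by positivity
    have := mul_le_mul_of_nonneg_left hkey hcnn
    calc (J.card : ℝ) * (sigmaMinSq A / frob2 A) * norm2 (A *ᵥ (x - xstar))
        = (J.card : ℝ) / frob2 A * (sigmaMinSq A * norm2 (A *ᵥ (x - xstar))) := by ring
      _ ≤ (J.card : ℝ) / frob2 A * norm2 g := this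
      _ = (J.card : ℝ) * (norm2 g / frob2 A) := by ring
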